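/- Fix real k₁, k₂ and let φ₀₀(x,y) = (2π)^{−1/2} exp(−(1+2k₂)x²/4 − (1−2k₁)y²/4). Then for every n, l ∈ ℕ and every (x,y) ∈ ℝ²: (B′ⁿ φ₀₀)(x,y) = 2^{−n/2} (x + i y)ⁿ φ₀₀(x,y) and (Bˡ φ₀₀)(x,y) = iˡ 2^{−l/2} (x − i y)ˡ φ₀₀(x,y). Consequently φ_{n,0} = (2ⁿ n!)^{−1/2} (x+iy)ⁿ φ₀₀ and φ_{0,l} = iˡ (2ˡ l!)^{−1/2} (x−iy)ˡ φ₀₀, where φ_{n,l} = (n! l!)^{−1/2} B′ⁿ Bˡ φ₀₀. -/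

import Mathlib

open MeasureTheory

/-- Partial derivative in the `x`-direction of a function on `ℝ²`. -/
noncomputable def pdx (f : ℝ × ℝ → ℂ) : ℝ × ℝ → ℂ := fun p => fderiv ℝ f p (1, 0)

/-- Partial derivative in the `y`-direction of a function on `ℝ²`. -/
noncomputable def pdy (f : ℝ × ℝ → ℂ) : ℝ × ℝ → ℂ := fun p => fderiv ℝ f p (0, 1)

/-- `B f = (1/√2)(−i ∂ₓ f − ∂_y f + ((i x/2)(1−2k₂) + (y/2)(1+2k₁)) f)`. -/
noncomputable def Bgll (k₁ k₂ : ℝ) (f : ℝ × ℝ → ℂ) : ℝ × ℝ → ℂ := fun p =>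
  (Real.sqrt 2 : ℂ)⁻¹ * (-Complex.I * pdx f p - pdy f p +
    ((Complex.I * (p.1 : ℂ) / 2) * (1 - 2 * (k₂ : ℂ)) +
      ((p.2 : ℂ) / 2) * (1 + 2 * (k₁ : ℂ))) * f p)

/-- `B′ f = (1/√2)(−∂ₓ f − i ∂_y f + ((x/2)(1−2k₂) + (i y/2)(1+2k₁)) f)`. -/
noncomputable def B'gll (k₁ k₂ : ℝ) (f : ℝ × ℝ → ℂ) : ℝ × ℝ → ℂ := fun p =>
  (Real.sqrt 2 : ℂ)⁻¹ * (-pdx f p - Complex.I * pdy f p +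
    (((p.1 : ℂ) / 2) * (1 - 2 * (k₂ : ℂ)) +
      (Complex.I * (p.2 : ℂ) / 2) * (1 + 2 * (k₁ : ℂ))) * f p)

/-- `φ₀₀(x,y) = (2π)^{−1/2} exp(−(1+2k₂)x²/4 − (1−2k₁)y²/4)`. -/
noncomputable def phi00 (k₁ k₂ : ℝ) : ℝ × ℝ → ℂ := fun p =>
  (Real.sqrt (2 * Real.pi) : ℂ)⁻¹ *
    Complex.exp (-(1 + 2 * (k₂ : ℂ)) * (p.1 : ℂ) ^ 2 / 4 -
      (1 - 2 * (k₁ : ℂ)) * (p.2 : ℂ) ^ 2 / 4)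

/-- `φ_{n,l} = (n! l!)^{−1/2} B′ⁿ Bˡ φ₀₀`. -/
noncomputable def phiNL (k₁ k₂ : ℝ) (n l : ℕ) : ℝ × ℝ → ℂ := fun p =>
  (Real.sqrt (n.factorial * l.factorial) : ℂ)⁻¹ *
    ((B'gll k₁ k₂)^[n] ((Bgll k₁ k₂)^[l] (phi00 k₁ k₂)) p)

lemma myPow {f : ℝ × ℝ → ℂ} {f' : ℝ × ℝ →L[ℝ] ℂ} {p : ℝ × ℝ} (hf : HasFDerivAt f f' p) :
    ∀ n : ℕ, HasFDerivAt (fun q => f q ^ n) (((n : ℂ) * f p ^ (n - 1)) • f') p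
  | 0 => by
      refine (hasFDerivAt_const (1 : ℂ) p).congr_fderiv ?_
      refine ContinuousLinearMap.ext fun v => ?_
      simp
  | (n + 1) => by
      have h := (myPow hf n).mul hf
      have hfun : (fun q => f q ^ (n + 1)) = fun q => f q ^ n * f q := by
        funext q; rw [pow_succ]
      rw [hfun]
      refine h.congr_fderiv ?_
      refine ContinuousLinearMap.ext fun v => ?_
      simp only [ContinuousLinearMap.add_apply, ContinuousLinearMap.smul_apply, smul_eq_mul]
      cases n with
      | zero => simp
      | succ m =>
        push_cast [Nat.add_sub_cancel, pow_succ]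
        ring

lemma pd_F (k₁ k₂ : ℝ) (C c : ℂ) (n : ℕ) (p : ℝ × ℝ) :
    pdx (fun q => C * (((q.1 : ℂ) + c * (q.2 : ℂ)) ^ n * phi00 k₁ k₂ q)) p
      = C * (((n : ℂ) * ((p.1 : ℂ) + c * p.2) ^ (n - 1)
          - (1 + 2 * (k₂ : ℂ)) * (p.1 : ℂ) / 2 * ((p.1 : ℂ) + c * p.2) ^ n) * phi00 k₁ k₂ p)
    ∧ pdy (fun q => C * (((q.1 : ℂ) + c * (q.2 : ℂ)) ^ n * phi00 k₁ k₂ q)) p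
      = C * ((c * (n : ℂ) * ((p.1 : ℂ) + c * p.2) ^ (n - 1)
          - (1 - 2 * (k₁ : ℂ)) * (p.2 : ℂ) / 2 * ((p.1 : ℂ) + c * p.2) ^ n) * phi00 k₁ k₂ p) := by
  set X1 : ℝ × ℝ →L[ℝ] ℂ := Complex.ofRealCLM.comp (ContinuousLinearMap.fst ℝ ℝ ℝ) with hX1
  set X2 : ℝ × ℝ →L[ℝ] ℂ := Complex.ofRealCLM.comp (ContinuousLinearMap.snd ℝ ℝ ℝ) with hX2
  have h1 : HasFDerivAt (fun q : ℝ × ℝ => (q.1 : ℂ)) X1 p := X1.hasFDerivAt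
  have h2 : HasFDerivAt (fun q : ℝ × ℝ => (q.2 : ℂ)) X2 p := X2.hasFDerivAt
  have hw := myPow (h1.add (h2.const_mul c)) n
  change HasFDerivAt (fun q : ℝ × ℝ => ((q.1 : ℂ) + c * (q.2 : ℂ)) ^ n) _ p at hw
  have ha' := ((myPow h1 2).const_mul (-(1 + 2 * (k₂ : ℂ)) / 4)).add
    ((myPow h2 2).const_mul (-((1 - 2 * (k₁ : ℂ)) / 4)))
  have hfun : (fun q : ℝ × ℝ => -(1 + 2 * (k₂ : ℂ)) * (q.1 : ℂ) ^ 2 / 4 -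
      (1 - 2 * (k₁ : ℂ)) * (q.2 : ℂ) ^ 2 / 4)
      = fun q : ℝ × ℝ => -(1 + 2 * (k₂ : ℂ)) / 4 * (q.1 : ℂ) ^ 2 +
          -((1 - 2 * (k₁ : ℂ)) / 4) * (q.2 : ℂ) ^ 2 := by
    funext q; ring
  have ha := ha'
  change HasFDerivAt (fun q : ℝ × ℝ => -(1 + 2 * (k₂ : ℂ)) / 4 * (q.1 : ℂ) ^ 2 +
    -((1 - 2 * (k₁ : ℂ)) / 4) * (q.2 : ℂ) ^ 2) _ p at ha
  rw [← hfun] at ha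
  have hphi := ha.cexp.const_mul ((Real.sqrt (2 * Real.pi) : ℂ))⁻¹
  have H := (hw.mul hphi).const_mul C
  change HasFDerivAt (fun q : ℝ × ℝ => C * (((q.1 : ℂ) + c * (q.2 : ℂ)) ^ n *
    ((Real.sqrt (2 * Real.pi) : ℂ)⁻¹ * Complex.exp (-(1 + 2 * (k₂ : ℂ)) * (q.1 : ℂ) ^ 2 / 4 -
      (1 - 2 * (k₁ : ℂ)) * (q.2 : ℂ) ^ 2 / 4)))) _ p at H
  have hfd := H.fderiv
  constructor <;>
  · simp only [pdx, pdy, phi00]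
    rw [hfd]
    simp only [hX1, hX2, ContinuousLinearMap.add_apply, ContinuousLinearMap.sub_apply,
      ContinuousLinearMap.smul_apply, ContinuousLinearMap.coe_comp', Function.comp_apply,
      ContinuousLinearMap.coe_fst', ContinuousLinearMap.coe_snd', Complex.ofRealCLM_apply,
      smul_eq_mul, Complex.ofReal_one, Complex.ofReal_zero, mul_zero, mul_one, zero_mul,
      Nat.cast_ofNat, pow_one, Pi.add_apply]
    push_cast
    ring

lemma stepB' (k₁ k₂ : ℝ) (C : ℂ) (n : ℕ) (p : ℝ × ℝ) :
    B'gll k₁ k₂ (fun q => C * (((q.1 : ℂ) + Complex.I * (q.2 : ℂ)) ^ n * phi00 k₁ k₂ q)) p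
      = ((Real.sqrt 2 : ℂ)⁻¹ * C) *
          (((p.1 : ℂ) + Complex.I * (p.2 : ℂ)) ^ (n + 1) * phi00 k₁ k₂ p) := by
  obtain ⟨hx, hy⟩ := pd_F k₁ k₂ C Complex.I n p
  simp only [B'gll, hx, hy]
  have hI : Complex.I * Complex.I = -1 := Complex.I_mul_I
  rw [pow_succ]
  linear_combination (-((Real.sqrt 2 : ℂ)⁻¹ * C * (n : ℂ) *
    ((p.1 : ℂ) + Complex.I * (p.2 : ℂ)) ^ (n - 1) * phi00 k₁ k₂ p)) * hI

lemma stepB (k₁ k₂ : ℝ) (C : ℂ) (n : ℕ) (p : ℝ × ℝ) :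
    Bgll k₁ k₂ (fun q => C * (((q.1 : ℂ) + (-Complex.I) * (q.2 : ℂ)) ^ n * phi00 k₁ k₂ q)) p
      = ((Real.sqrt 2 : ℂ)⁻¹ * (Complex.I * C)) *
          (((p.1 : ℂ) + (-Complex.I) * (p.2 : ℂ)) ^ (n + 1) * phi00 k₁ k₂ p) := by
  obtain ⟨hx, hy⟩ := pd_F k₁ k₂ C (-Complex.I) n p
  simp only [Bgll, hx, hy]
  have hI : Complex.I * Complex.I = -1 := Complex.I_mul_I
  rw [pow_succ]
  linear_combination ((Real.sqrt 2 : ℂ)⁻¹ * C * (p.2 : ℂ) *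
    ((p.1 : ℂ) + (-Complex.I) * (p.2 : ℂ)) ^ n * phi00 k₁ k₂ p) * hI

lemma key1 (k₁ k₂ : ℝ) : ∀ m : ℕ, (B'gll k₁ k₂)^[m] (phi00 k₁ k₂)
    = fun q => ((Real.sqrt 2 : ℂ)⁻¹) ^ m *
        (((q.1 : ℂ) + Complex.I * (q.2 : ℂ)) ^ m * phi00 k₁ k₂ q)
  | 0 => by funext q; simp
  | (m + 1) => by
      funext q
      rw [Function.iterate_succ_apply', key1 k₁ k₂ m,
        stepB' k₁ k₂ (((Real.sqrt 2 : ℂ)⁻¹) ^ m) m q]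
      ring

lemma key2 (k₁ k₂ : ℝ) : ∀ m : ℕ, (Bgll k₁ k₂)^[m] (phi00 k₁ k₂)
    = fun q => (Complex.I ^ m * ((Real.sqrt 2 : ℂ)⁻¹) ^ m) *
        (((q.1 : ℂ) + (-Complex.I) * (q.2 : ℂ)) ^ m * phi00 k₁ k₂ q)
  | 0 => by funext q; simp
  | (m + 1) => by
      funext q
      rw [Function.iterate_succ_apply', key2 k₁ k₂ m,
        stepB k₁ k₂ (Complex.I ^ m * ((Real.sqrt 2 : ℂ)⁻¹) ^ m) m q]
      ring

lemma sqrt_split (a : ℕ) : Real.sqrt (2 ^ a * a.factorial)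
    = Real.sqrt 2 ^ a * Real.sqrt a.factorial := by
  rw [show (2 : ℝ) ^ a * a.factorial = (Real.sqrt 2 ^ a * Real.sqrt a.factorial) ^ 2 by
    rw [mul_pow, ← pow_mul, mul_comm a 2, pow_mul, Real.sq_sqrt (by norm_num),
      Real.sq_sqrt (by positivity)]]
  exact Real.sqrt_sq (by positivity)

theorem statement5 (k₁ k₂ : ℝ) (n l : ℕ) (p : ℝ × ℝ) :
    ((B'gll k₁ k₂)^[n] (phi00 k₁ k₂) p =
      (Real.sqrt 2 : ℂ)⁻¹ ^ n * ((p.1 : ℂ) + Complex.I * (p.2 : ℂ)) ^ n * phi00 k₁ k₂ p) ∧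
    ((Bgll k₁ k₂)^[l] (phi00 k₁ k₂) p =
      Complex.I ^ l * (Real.sqrt 2 : ℂ)⁻¹ ^ l *
        ((p.1 : ℂ) - Complex.I * (p.2 : ℂ)) ^ l * phi00 k₁ k₂ p) ∧
    (phiNL k₁ k₂ n 0 p =
      (Real.sqrt (2 ^ n * n.factorial) : ℂ)⁻¹ *
        ((p.1 : ℂ) + Complex.I * (p.2 : ℂ)) ^ n * phi00 k₁ k₂ p) ∧
    (phiNL k₁ k₂ 0 l p =
      Complex.I ^ l * (Real.sqrt (2 ^ l * l.factorial) : ℂ)⁻¹ *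
        ((p.1 : ℂ) - Complex.I * (p.2 : ℂ)) ^ l * phi00 k₁ k₂ p) := by
  have hz : ((p.1 : ℂ) + (-Complex.I) * (p.2 : ℂ)) = (p.1 : ℂ) - Complex.I * (p.2 : ℂ) := by ring
  refine ⟨?_, ?_, ?_, ?_⟩
  · rw [key1]; ring
  · rw [key2, ← hz]; ring
  · simp only [phiNL, Function.iterate_zero, id_eq, key1, Nat.factorial_zero, Nat.cast_one,
      mul_one]
    rw [sqrt_split]
    push_cast
    rw [mul_inv, inv_pow]
    ring
  · simp only [phiNL, Function.iterate_zero, id_eq, key2, Nat.factorial_zero, Nat.cast_one,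
      one_mul]
    rw [← hz, sqrt_split]
    push_cast
    rw [mul_inv, inv_pow]
    ring
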